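/- arXiv:1807.08715 — 3 statements merged into one kernel-verified Lean document; each statement's English description precedes it below -/
import Mathlib

section
/- Let X be a real random variable that is symmetric about zero (i.e., X and -X have the same distribution) with finite nonzero second moment, and let κ > 1 be a fixed real number. Then there exists a real random variable X* whose distribution has compact support (i.e., X* is almost surely bounded), with nonzero variance, such that P(|X - E[X]| ≥ κ·σ_X) ≤ P(|X* - E[X*]| ≥ κ·σ_{X*}), where σ_X and σ_{X*} denote the standard deviations of X and X* respectively. -/
open MeasureTheory ProbabilityTheory Filter

lemma odd_integral_zero' {Ω : Type*} [MeasureSpace Ω] [IsProbabilityMeasure (ℙ : Measure Ω)]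
    (X : Ω → ℝ) (hXmeas : Measurable X)
    (hsym : Measure.map X ℙ = Measure.map (fun ω => -X ω) ℙ)
    (f : ℝ → ℝ) (hf : Measurable f) (hodd : ∀ x, f (-x) = - f x)
    (hint : Integrable (fun ω => f (X ω)) ℙ) :
    ∫ ω, f (X ω) ∂ℙ = 0 := by
  have h1 : ∫ ω, f (X ω) ∂ℙ = ∫ x, f x ∂(Measure.map X ℙ) :=
    (integral_map hXmeas.aemeasurable hf.aestronglyMeasurable).symm
  have h2 : ∫ x, f x ∂(Measure.map (fun ω => -X ω) ℙ) = ∫ ω, f (-X ω) ∂ℙ :=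
    integral_map (hXmeas.neg.aemeasurable) hf.aestronglyMeasurable
  have h3 : ∫ ω, f (-X ω) ∂ℙ = - ∫ ω, f (X ω) ∂ℙ := by
    simp_rw [hodd]; exact integral_neg _
  have h4 : ∫ ω, f (X ω) ∂ℙ = - ∫ ω, f (X ω) ∂ℙ := by
    calc ∫ ω, f (X ω) ∂ℙ = ∫ x, f x ∂(Measure.map X ℙ) := h1
      _ = ∫ x, f x ∂(Measure.map (fun ω => -X ω) ℙ) := by rw [hsym]
      _ = ∫ ω, f (-X ω) ∂ℙ := h2
      _ = - ∫ ω, f (X ω) ∂ℙ := h3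
  linarith

/-- If `X` is a real random variable symmetric about zero with finite
nonzero second moment and `κ > 1`, then there exists an almost surely bounded
(compactly supported) random variable `X*` with nonzero variance whose outlier
probability at level `κ` is at least that of `X`. -/
theorem outlier_prob_le_of_compact_support
    {Ω : Type*} [MeasureSpace Ω] [IsProbabilityMeasure (ℙ : Measure Ω)]
    (X : Ω → ℝ) (hXmeas : Measurable X)
    (hsym : Measure.map X ℙ = Measure.map (fun ω => -X ω) ℙ)
    (hX2 : MemLp X 2 ℙ) (hX2ne : ∫ ω, (X ω) ^ 2 ∂ℙ ≠ 0)
    (κ : ℝ) (hκ : 1 < κ) :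
    ∃ Xs : Ω → ℝ, Measurable Xs ∧ (∃ C : ℝ, ∀ᵐ ω ∂ℙ, |Xs ω| ≤ C) ∧
      variance Xs ℙ ≠ 0 ∧
      ℙ {ω | κ * Real.sqrt (variance X ℙ) ≤ |X ω - ∫ ω', X ω' ∂ℙ|} ≤
        ℙ {ω | κ * Real.sqrt (variance Xs ℙ) ≤ |Xs ω - ∫ ω', Xs ω' ∂ℙ|} := by
  set σ := Real.sqrt (variance X ℙ) with hσdef
  have hσ0 : 0 ≤ σ := Real.sqrt_nonneg _
  have hκ0 : (0:ℝ) < κ := lt_trans one_pos hκ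
  set A := κ * σ + 1 with hAdef
  have hA : 0 < A := by positivity
  set f : ℝ → ℝ := fun x => max (-A) (min A x) with hfdef
  set Xs : Ω → ℝ := fun ω => f (X ω) with hXsdef
  have hfmeas : Measurable f := measurable_const.max (measurable_const.min measurable_id)
  have hXsmeas : Measurable Xs := hfmeas.comp hXmeas
  -- pointwise facts about f
  have hfodd : ∀ x, f (-x) = - f x := by
    intro x
    simp only [hfdef, min_def, max_def]
    split_ifs <;> linarith
  have hfabs : ∀ x, |f x| ≤ |x| := by
    intro x
    rcases abs_cases x with ⟨h1, h2⟩ | ⟨h1, h2⟩ <;>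
      (rw [abs_le]; simp only [hfdef, min_def, max_def];
        constructor <;> (split_ifs <;> linarith))
  have hfbd : ∀ x, |f x| ≤ A := by
    intro x
    rw [abs_le]; simp only [hfdef, min_def, max_def]
    constructor <;> (split_ifs <;> linarith)
  have hfid : ∀ x, |x| ≤ A → f x = x := by
    intro x hx
    rw [abs_le] at hx
    simp only [hfdef, min_def, max_def]
    split_ifs <;> linarith
  have hfbig : ∀ x, A < |x| → |f x| = A := by
    intro x hx
    rcases le_or_gt x 0 with h | h
    · have hxA : x < -A := by rcases abs_cases x with ⟨h1, _⟩ | ⟨h1, _⟩ <;> linarith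
      have hfx : f x = -A := by
        simp only [hfdef, min_def, max_def]; split_ifs <;> linarith
      rw [hfx, abs_neg, abs_of_pos hA]
    · have hxA : A < x := by rcases abs_cases x with ⟨h1, _⟩ | ⟨h1, _⟩ <;> linarith
      have hfx : f x = A := by
        simp only [hfdef, min_def, max_def]; split_ifs <;> linarith
      rw [hfx, abs_of_pos hA]
  have hfzero : ∀ x, f x = 0 → x = 0 := by
    intro x hx
    simp only [hfdef, min_def, max_def] at hx
    split_ifs at hx <;> linarith
  -- integrability
  have hXs2 : MemLp Xs 2 ℙ := MemLp.of_bound hXsmeas.aestronglyMeasurable A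
    (Filter.Eventually.of_forall fun ω => by simpa using hfbd (X ω))
  have hXsint : Integrable Xs ℙ := hXs2.integrable one_le_two
  have hXint : Integrable X ℙ := hX2.integrable one_le_two
  -- means are zero
  have hEX : ∫ ω, X ω ∂ℙ = 0 :=
    odd_integral_zero' X hXmeas hsym id measurable_id (fun x => rfl) hXint
  have hEXs : ∫ ω, Xs ω ∂ℙ = 0 :=
    odd_integral_zero' X hXmeas hsym f hfmeas hfodd hXsint
  -- variances as second moments
  have hvarX : variance X ℙ = ∫ ω, (X ω) ^ 2 ∂ℙ := by
    rw [variance_eq_sub hX2, hEX]; simp [Pi.pow_apply]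
  have hvarXs : variance Xs ℙ = ∫ ω, (Xs ω) ^ 2 ∂ℙ := by
    rw [variance_eq_sub hXs2, hEXs]; simp [Pi.pow_apply]
  -- variance Xs ≤ variance X
  have hsqle : ∀ ω, (Xs ω) ^ 2 ≤ (X ω) ^ 2 := fun ω => by
    have := hfabs (X ω)
    calc (Xs ω) ^ 2 = |f (X ω)| ^ 2 := (sq_abs _).symm
      _ ≤ |X ω| ^ 2 := by gcongr
      _ = (X ω) ^ 2 := sq_abs _
  have hvarle : variance Xs ℙ ≤ variance X ℙ := by
    rw [hvarX, hvarXs]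
    exact integral_mono hXs2.integrable_sq hX2.integrable_sq hsqle
  -- variance Xs ≠ 0
  have hvarXs_ne : variance Xs ℙ ≠ 0 := by
    intro h0
    rw [hvarXs] at h0
    have hae : (fun ω => (Xs ω) ^ 2) =ᵐ[ℙ] 0 :=
      (integral_eq_zero_iff_of_nonneg (fun ω => sq_nonneg _) hXs2.integrable_sq).mp h0
    have hX0 : (fun ω => (X ω) ^ 2) =ᵐ[ℙ] 0 := by
      filter_upwards [hae] with ω hω
      have : Xs ω = 0 := by
        have := sq_eq_zero_iff.mp hω
        exact this
      have hx : X ω = 0 := hfzero (X ω) this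
      simp [hx]
    exact hX2ne (by rw [integral_congr_ae hX0]; simp)
  refine ⟨Xs, hXsmeas, ⟨A, Filter.Eventually.of_forall fun ω => hfbd (X ω)⟩, hvarXs_ne, ?_⟩
  apply measure_mono
  intro ω hω
  simp only [Set.mem_setOf_eq, hEX, hEXs, sub_zero] at hω ⊢
  have hσs_le : Real.sqrt (variance Xs ℙ) ≤ σ := Real.sqrt_le_sqrt hvarle
  have hκσs : κ * Real.sqrt (variance Xs ℙ) ≤ κ * σ :=
    mul_le_mul_of_nonneg_left hσs_le (le_of_lt hκ0)
  rcases le_or_gt (|X ω|) A with hcase | hcase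
  · have : Xs ω = X ω := hfid (X ω) hcase
    rw [this]
    exact le_trans hκσs hω
  · have : |Xs ω| = A := hfbig (X ω) hcase
    rw [this]
    linarith
end

section
/- Let X₁, X₂, … be a sequence of independent identically distributed real random variables with E|X₁| < ∞ and E[X₁²] = ∞, and let k > 0 be fixed. Let x̄_n = (1/n)·Σ_{j=1}^{n} X_j and s_n² = (1/n)·Σ_{j=1}^{n}(X_j - x̄_n)². Then p_n = P(|X₁ - x̄_n| > k·s_n) tends to 0 as n → ∞. -/
open MeasureTheory ProbabilityTheory Filter

section Aux

variable {Ω : Type*} [MeasureSpace Ω] [IsProbabilityMeasure (ℙ : Measure Ω)]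

/-- Truncated squares: `min ((X j ω)^2) m`. -/
private lemma trunc_meas (m : ℕ) : Measurable (fun x : ℝ => min (x ^ 2) (m : ℝ)) :=
  (measurable_id.pow_const 2).min measurable_const

/-- If the second moment is infinite, averages of truncated squares have unbounded limits,
hence the empirical average of squares tends to infinity a.s. -/
lemma avg_sq_tendsto_atTop
    (X : ℕ → Ω → ℝ) (hXmeas : ∀ i, Measurable (X i))
    (hindep : iIndepFun X ℙ)
    (hident : ∀ i, IdentDistrib (X i) (X 0) ℙ ℙ)
    (hinf : ¬ Integrable (fun ω => (X 0 ω) ^ 2) ℙ) :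
    ∀ᵐ ω ∂(ℙ : Measure Ω),
      Tendsto (fun n : ℕ => (∑ j ∈ Finset.range n, (X j ω) ^ 2) / n) atTop atTop := by
  -- truncated variables
  set Y : ℕ → ℕ → Ω → ℝ := fun m j ω => min ((X j ω) ^ 2) (m : ℝ) with hY
  have hYmeas : ∀ m j, Measurable (Y m j) := fun m j => (trunc_meas m).comp (hXmeas j)
  have hYnonneg : ∀ m j ω, 0 ≤ Y m j ω := fun m j ω =>
    le_min (sq_nonneg _) (Nat.cast_nonneg m)
  have hYle : ∀ m j ω, Y m j ω ≤ (m : ℝ) := fun m j ω => min_le_right _ _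
  have hYint : ∀ m, Integrable (Y m 0) ℙ := by
    intro m
    refine (integrable_const (m : ℝ)).mono' ((hYmeas m 0).aestronglyMeasurable) ?_
    exact Filter.Eventually.of_forall fun ω => by
      rw [Real.norm_of_nonneg (hYnonneg m 0 ω)]; exact hYle m 0 ω
  have hYindep : ∀ m, Pairwise (Function.onFun (IndepFun · · (ℙ : Measure Ω)) (Y m)) := by
    intro m i j hij
    exact (hindep.indepFun hij).comp (trunc_meas m) (trunc_meas m)
  have hYident : ∀ m i, IdentDistrib (Y m i) (Y m 0) ℙ ℙ := fun m i =>
    (hident i).comp (trunc_meas m)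
  -- strong law for each truncation level
  have hSLLN : ∀ m : ℕ, ∀ᵐ ω ∂(ℙ : Measure Ω),
      Tendsto (fun n : ℕ => (∑ i ∈ Finset.range n, Y m i ω) / n) atTop
        (nhds (∫ ω, Y m 0 ω ∂ℙ)) := fun m =>
    strong_law_ae_real (Y m) (hYint m) (hYindep m) (hYident m)
  -- the truncated expectations tend to infinity
  have hlinf : ∫⁻ ω, ENNReal.ofReal ((X 0 ω) ^ 2) ∂ℙ = ⊤ := by
    by_contra h
    apply hinf
    refine ⟨((hXmeas 0).pow_const 2).aestronglyMeasurable, ?_⟩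
    rw [hasFiniteIntegral_iff_norm]
    simp only [Real.norm_of_nonneg (sq_nonneg _)]
    exact lt_top_iff_ne_top.2 h
  have hlim : Tendsto (fun m : ℕ => ∫⁻ ω, ENNReal.ofReal (Y m 0 ω) ∂ℙ) atTop
      (nhds (∫⁻ ω, ENNReal.ofReal ((X 0 ω) ^ 2) ∂ℙ)) := by
    apply lintegral_tendsto_of_tendsto_of_monotone
    · exact fun m => (ENNReal.measurable_ofReal.comp (hYmeas m 0)).aemeasurable
    · refine Filter.Eventually.of_forall fun ω m m' hmm' => ?_
      exact ENNReal.ofReal_le_ofReal (min_le_min le_rfl (Nat.cast_le.2 hmm'))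
    · refine Filter.Eventually.of_forall fun ω => ?_
      have : ∀ᶠ m : ℕ in atTop, ENNReal.ofReal (Y m 0 ω) =
          ENNReal.ofReal ((X 0 ω) ^ 2) := by
        filter_upwards [eventually_ge_atTop (Nat.ceil ((X 0 ω) ^ 2))] with m hm
        have : (X 0 ω) ^ 2 ≤ (m : ℝ) := le_trans (Nat.le_ceil _) (Nat.cast_le.2 hm)
        rw [hY]; simp [min_eq_left this]
      exact Tendsto.congr' (this.mono fun m hm => hm.symm) tendsto_const_nhds
  rw [hlinf] at hlim
  have hlint : ∀ m : ℕ, ∫⁻ ω, ENNReal.ofReal (Y m 0 ω) ∂ℙ ≠ ⊤ := by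
    intro m
    have := (hYint m).hasFiniteIntegral
    rw [hasFiniteIntegral_iff_norm] at this
    have heq : (fun ω => ENNReal.ofReal ‖Y m 0 ω‖) = fun ω => ENNReal.ofReal (Y m 0 ω) := by
      funext ω; rw [Real.norm_of_nonneg (hYnonneg m 0 ω)]
    rw [heq] at this
    exact this.ne
  have hEeq : ∀ m : ℕ, ∫ ω, Y m 0 ω ∂ℙ = (∫⁻ ω, ENNReal.ofReal (Y m 0 ω) ∂ℙ).toReal := by
    intro m
    exact integral_eq_lintegral_of_nonneg_ae
      (Filter.Eventually.of_forall (hYnonneg m 0)) (hYmeas m 0).aestronglyMeasurable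
  have hEunbdd : ∀ C : ℝ, ∃ m : ℕ, C ≤ ∫ ω, Y m 0 ω ∂ℙ := by
    intro C
    have : ∀ᶠ m : ℕ in atTop, ENNReal.ofReal C < ∫⁻ ω, ENNReal.ofReal (Y m 0 ω) ∂ℙ :=
      hlim.eventually (eventually_gt_nhds (ENNReal.ofReal_lt_top))
    obtain ⟨m, hm⟩ := this.exists
    refine ⟨m, ?_⟩
    rw [hEeq m]
    exact (ENNReal.ofReal_le_iff_le_toReal (hlint m)).1 hm.le
  -- combine: a.e. all truncation levels converge
  filter_upwards [ae_all_iff.2 hSLLN] with ω hω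
  rw [tendsto_atTop_atTop]
  intro C
  obtain ⟨m, hm⟩ := hEunbdd (C + 1)
  have h1 : ∀ᶠ n : ℕ in atTop, C < (∑ i ∈ Finset.range n, Y m i ω) / n :=
    (hω m).eventually (eventually_gt_nhds (by linarith))
  obtain ⟨N, hN⟩ := (h1.and (eventually_ge_atTop 1)).exists_forall_of_atTop
  refine ⟨N, fun n hn => ?_⟩
  obtain ⟨hCn, hn1⟩ := hN n hn
  refine le_trans hCn.le ?_
  have hnpos : (0 : ℝ) < n := by exact_mod_cast hn1
  have hsum : (∑ i ∈ Finset.range n, Y m i ω) ≤ ∑ j ∈ Finset.range n, (X j ω) ^ 2 :=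
    Finset.sum_le_sum fun j _ => min_le_left _ _
  exact div_le_div_of_nonneg_right hsum hnpos.le

end Aux

/-- (Theorem 1 of the paper, integrable case.) For an i.i.d. sequence
of integrable real random variables with infinite second moment and any fixed `k > 0`,
the probability `p_n = P(|X₁ - x̄_n| > k·s_n)` tends to `0` as `n → ∞`, where `x̄_n`
and `s_n²` are the empirical mean and empirical variance. -/
theorem no_outliers_of_infinite_variance
    {Ω : Type*} [MeasureSpace Ω] [IsProbabilityMeasure (ℙ : Measure Ω)]
    (X : ℕ → Ω → ℝ) (hXmeas : ∀ i, Measurable (X i))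
    (hindep : iIndepFun X ℙ)
    (hident : ∀ i, IdentDistrib (X i) (X 0) ℙ ℙ)
    (hint : Integrable (X 0) ℙ)
    (hinf : ¬ Integrable (fun ω => (X 0 ω) ^ 2) ℙ)
    (k : ℝ) (hk : 0 < k) :
    Tendsto
      (fun n : ℕ => ℙ {ω | k * Real.sqrt ((1 / (n : ℝ)) * ∑ j ∈ Finset.range n,
          (X j ω - (1 / (n : ℝ)) * ∑ i ∈ Finset.range n, X i ω) ^ 2)
        < |X 0 ω - (1 / (n : ℝ)) * ∑ i ∈ Finset.range n, X i ω|})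
      atTop (nhds 0) := by
  set xbar : ℕ → Ω → ℝ := fun n ω => (1 / (n : ℝ)) * ∑ i ∈ Finset.range n, X i ω with hxbar
  set s2 : ℕ → Ω → ℝ := fun n ω =>
    (1 / (n : ℝ)) * ∑ j ∈ Finset.range n, (X j ω - xbar n ω) ^ 2 with hs2
  set A : ℕ → Set Ω := fun n => {ω | k * Real.sqrt (s2 n ω) < |X 0 ω - xbar n ω|} with hA
  -- measurability of the sets
  have hAmble : ∀ n, MeasurableSet (A n) := by
    intro n
    have hxm : Measurable (xbar n) :=
      (measurable_const.mul (Finset.measurable_sum _ fun i _ => hXmeas i))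
    have hs2m : Measurable (s2 n) := by
      apply measurable_const.mul
      exact Finset.measurable_sum _ fun j _ => ((hXmeas j).sub hxm).pow_const 2
    exact measurableSet_lt
      ((measurable_const.mul (Real.continuous_sqrt.measurable.comp hs2m)))
      (((hXmeas 0).sub hxm).abs)
  -- a.e. pointwise: eventually not in A n
  have hae : ∀ᵐ ω ∂(ℙ : Measure Ω), ∀ᶠ n : ℕ in atTop, ω ∈ A n ↔ ω ∈ (∅ : Set Ω) := by
    have hmean := strong_law_ae_real X hint
      (fun i j hij => hindep.indepFun hij) hident
    have hsq := avg_sq_tendsto_atTop X hXmeas hindep hident hinf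
    filter_upwards [hmean, hsq] with ω hm hs
    have hxbar_lim : Tendsto (fun n : ℕ => xbar n ω) atTop (nhds (∫ ω, X 0 ω ∂ℙ)) := by
      refine hm.congr (fun n => ?_)
      rw [hxbar]; ring
    set μ0 := ∫ ω, X 0 ω ∂ℙ
    -- identity for s2 on n ≥ 1
    have hs2eq : ∀ n : ℕ, 1 ≤ n → s2 n ω =
        (∑ j ∈ Finset.range n, (X j ω) ^ 2) / n - (xbar n ω) ^ 2 := by
      intro n hn
      have hnne : (n : ℝ) ≠ 0 := by positivity
      have hsum : ∑ j ∈ Finset.range n, (X j ω - xbar n ω) ^ 2 =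
          (∑ j ∈ Finset.range n, (X j ω) ^ 2)
            - (∑ j ∈ Finset.range n, X j ω) * (2 * xbar n ω)
            + n * (xbar n ω) ^ 2 := by
        have hterm : ∀ j, (X j ω - xbar n ω) ^ 2 =
            (X j ω) ^ 2 - X j ω * (2 * xbar n ω) + (xbar n ω) ^ 2 := fun j => by ring
        rw [Finset.sum_congr rfl fun j _ => hterm j, Finset.sum_add_distrib,
          Finset.sum_sub_distrib, ← Finset.sum_mul, Finset.sum_const,
          Finset.card_range, nsmul_eq_mul]
      have hs2' : s2 n ω = (1 / (n : ℝ)) *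
          ∑ j ∈ Finset.range n, (X j ω - xbar n ω) ^ 2 := rfl
      have hb : xbar n ω = (1 / (n : ℝ)) * ∑ i ∈ Finset.range n, X i ω := rfl
      rw [hs2', hsum, hb]
      field_simp
      ring
    -- s2 tends to infinity
    have hs2_lim : Tendsto (fun n : ℕ => s2 n ω) atTop atTop := by
      have hxsq : Tendsto (fun n : ℕ => -(xbar n ω) ^ 2) atTop (nhds (-μ0 ^ 2)) :=
        ((hxbar_lim.pow 2)).neg
      have hxsq_bdd : ∀ᶠ n : ℕ in atTop, -μ0 ^ 2 - 1 ≤ -(xbar n ω) ^ 2 :=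
        hxsq.eventually (eventually_ge_nhds (by linarith))
      have hmain : Tendsto
          (fun n : ℕ => (∑ j ∈ Finset.range n, (X j ω) ^ 2) / n - (xbar n ω) ^ 2)
          atTop atTop := by
        have := tendsto_atTop_add_right_of_le' (l := atTop) (-μ0 ^ 2 - 1) hs hxsq_bdd
        exact this.congr fun n => by ring
      refine Tendsto.congr' ?_ hmain
      filter_upwards [eventually_ge_atTop 1] with n hn
      exact (hs2eq n hn).symm
    -- |X 0 ω - xbar n ω| converges
    have habs : Tendsto (fun n : ℕ => |X 0 ω - xbar n ω|) atTop (nhds |X 0 ω - μ0|) :=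
      ((tendsto_const_nhds.sub hxbar_lim)).abs
    set L := |X 0 ω - μ0|
    have hLpos : 0 < L + 1 := by positivity
    have h1 : ∀ᶠ n : ℕ in atTop, |X 0 ω - xbar n ω| < L + 1 :=
      habs.eventually (eventually_lt_nhds (by linarith))
    have h2 : ∀ᶠ n : ℕ in atTop, ((L + 1) / k) ^ 2 ≤ s2 n ω :=
      hs2_lim.eventually (eventually_ge_atTop _)
    filter_upwards [h1, h2] with n hn1 hn2
    simp only [Set.mem_empty_iff_false, iff_false, hA, Set.mem_setOf_eq, not_lt]
    have hsqrt : (L + 1) / k ≤ Real.sqrt (s2 n ω) :=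
      (Real.le_sqrt' (by positivity)).2 hn2
    calc |X 0 ω - xbar n ω| ≤ L + 1 := hn1.le
      _ = k * ((L + 1) / k) := by field_simp
      _ ≤ k * Real.sqrt (s2 n ω) := by
          exact mul_le_mul_of_nonneg_left hsqrt hk.le
  have h := tendsto_measure_of_ae_tendsto_indicator_of_isFiniteMeasure
    (μ := (ℙ : Measure Ω)) atTop MeasurableSet.empty hAmble hae
  rw [show ((ℙ : Measure Ω) (∅ : Set Ω)) = 0 from measure_empty] at h
  exact h
end

section
/- Let X be a real random variable with E[X] = 0 and finite nonzero variance σ², and let κ > 1. Suppose P(|X| ≥ κ·σ) ≥ 1/κ². Then X takes values in the three-point set {-κσ, 0, κσ} almost surely, with P(X = κσ) = P(X = -κσ) = 1/(2κ²) and P(X = 0) = 1 - 1/κ². In particular, the distribution with maximal outlier probability at level κ among all finite-variance distributions is unique up to location and scale. -/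
open MeasureTheory ProbabilityTheory Filter

/-- (Uniqueness of the extremal distribution, via Selberg's inequality.)
If `X` is centered with finite nonzero variance `σ²`, `κ > 1`, and
`P(|X| ≥ κ·σ) ≥ 1/κ²`, then `X` is almost surely concentrated on `{-κσ, 0, κσ}`
with `P(X = κσ) = P(X = -κσ) = 1/(2κ²)` and `P(X = 0) = 1 - 1/κ²`. -/
theorem extremal_outlier_distribution_unique
    {Ω : Type*} [MeasureSpace Ω] [IsProbabilityMeasure (ℙ : Measure Ω)]
    (X : Ω → ℝ) (hXmeas : Measurable X) (hX2 : MemLp X 2 ℙ)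
    (hmean : ∫ ω, X ω ∂ℙ = 0) (hvar : variance X ℙ ≠ 0)
    (κ : ℝ) (hκ : 1 < κ)
    (hout : ENNReal.ofReal (1 / κ ^ 2)
      ≤ ℙ {ω | κ * Real.sqrt (variance X ℙ) ≤ |X ω|}) :
    (∀ᵐ ω ∂ℙ, X ω = -(κ * Real.sqrt (variance X ℙ)) ∨ X ω = 0
        ∨ X ω = κ * Real.sqrt (variance X ℙ)) ∧
    ℙ {ω | X ω = κ * Real.sqrt (variance X ℙ)} = ENNReal.ofReal (1 / (2 * κ ^ 2)) ∧
    ℙ {ω | X ω = -(κ * Real.sqrt (variance X ℙ))} = ENNReal.ofReal (1 / (2 * κ ^ 2)) ∧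
    ℙ {ω | X ω = 0} = ENNReal.ofReal (1 - 1 / κ ^ 2) := by
  have hκ0 : (0:ℝ) < κ := lt_trans one_pos hκ
  have hvpos : 0 < variance X ℙ := lt_of_le_of_ne (variance_nonneg X ℙ) (Ne.symm hvar)
  set σ := Real.sqrt (variance X ℙ) with hσdef
  have hσpos : 0 < σ := Real.sqrt_pos.mpr hvpos
  have hσsq : σ ^ 2 = variance X ℙ := Real.sq_sqrt hvpos.le
  set a := κ * σ with hadef
  have hapos : 0 < a := mul_pos hκ0 hσpos
  set S := {ω | a ≤ |X ω|} with hSdef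
  have hSmeas : MeasurableSet S := measurableSet_le measurable_const hXmeas.abs
  have hint_sq : Integrable (fun ω => X ω ^ 2) ℙ := hX2.integrable_sq
  have hEX2 : ∫ ω, X ω ^ 2 ∂ℙ = variance X ℙ := by
    have h := variance_eq_sub hX2
    simp only [hmean] at h
    rw [h]
    simp [Pi.pow_apply]
  set g : Ω → ℝ := S.indicator (fun _ => a ^ 2) with hgdef
  have hint_g : Integrable g ℙ := (integrable_const _).indicator hSmeas
  have hpt : ∀ ω, g ω ≤ X ω ^ 2 := by
    intro ω
    by_cases hω : ω ∈ S
    · have h1 : a ≤ |X ω| := hω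
      have : a ^ 2 ≤ X ω ^ 2 := by nlinarith [abs_nonneg (X ω), sq_abs (X ω)]
      simpa [hgdef, Set.indicator_of_mem hω] using this
    · simp only [hgdef, Set.indicator_of_notMem hω]
      positivity
  set t := (ℙ S).toReal with htdef
  have ht_nonneg : 0 ≤ t := ENNReal.toReal_nonneg
  have ht_ge : 1 / κ ^ 2 ≤ t := by
    have h := ENNReal.toReal_mono (measure_ne_top ℙ S) hout
    rwa [ENNReal.toReal_ofReal (by positivity)] at h
  have hIg : ∫ ω, g ω ∂ℙ = a ^ 2 * t := by
    rw [hgdef, integral_indicator_const _ hSmeas, smul_eq_mul, mul_comm, measureReal_def]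
  have hsub_int : ∫ ω, (X ω ^ 2 - g ω) ∂ℙ = variance X ℙ - a ^ 2 * t := by
    rw [integral_sub hint_sq hint_g, hEX2, hIg]
  have hge : 0 ≤ ∫ ω, (X ω ^ 2 - g ω) ∂ℙ :=
    integral_nonneg fun ω => sub_nonneg.mpr (hpt ω)
  have hle : ∫ ω, (X ω ^ 2 - g ω) ∂ℙ ≤ 0 := by
    rw [hsub_int]
    have h1 : a ^ 2 * (1 / κ ^ 2) = σ ^ 2 := by
      field_simp [hadef]
      ring
    nlinarith [mul_le_mul_of_nonneg_left ht_ge (by positivity : (0:ℝ) ≤ a ^ 2)]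
  have heq0 : ∫ ω, (X ω ^ 2 - g ω) ∂ℙ = 0 := le_antisymm hle hge
  have ht_eq : t = 1 / κ ^ 2 := by
    have h2 : variance X ℙ - a ^ 2 * t = 0 := by rw [← hsub_int]; exact heq0
    have h3 : a ^ 2 * t = σ ^ 2 := by rw [hσsq]; linarith
    have h4 : a ^ 2 = κ ^ 2 * σ ^ 2 := by rw [hadef]; ring
    have hκ2 : (0:ℝ) < κ ^ 2 := by positivity
    field_simp
    nlinarith
  have hae : ∀ᵐ ω ∂ℙ, X ω ^ 2 - g ω = 0 := by
    have h := (integral_eq_zero_iff_of_nonneg (fun ω => sub_nonneg.mpr (hpt ω))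
      (hint_sq.sub hint_g)).mp heq0
    filter_upwards [h] with ω hω using hω
  have htri : ∀ᵐ ω ∂ℙ, X ω = -a ∨ X ω = 0 ∨ X ω = a := by
    filter_upwards [hae] with ω hω
    by_cases hS : ω ∈ S
    · have hx2 : X ω ^ 2 = a ^ 2 := by
        have := hω
        simp only [hgdef, Set.indicator_of_mem hS] at this
        linarith
      rcases sq_eq_sq_iff_eq_or_eq_neg.mp hx2 with h | h
      · right; right; exact h
      · left; exact h
    · have hx2 : X ω ^ 2 = 0 := by
        have := hω
        simp only [hgdef, Set.indicator_of_notMem hS] at this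
        linarith
      right; left
      exact (pow_eq_zero_iff (two_ne_zero)).mp hx2
  set A := {ω | X ω = a} with hAdef
  set B := {ω | X ω = -a} with hBdef
  set Z := {ω | X ω = (0:ℝ)} with hZdef
  have hAmeas : MeasurableSet A := hXmeas (measurableSet_singleton a)
  have hBmeas : MeasurableSet B := hXmeas (measurableSet_singleton (-a))
  have hZmeas : MeasurableSet Z := hXmeas (measurableSet_singleton 0)
  have hAB_disj : Disjoint A B := by
    rw [Set.disjoint_left]
    intro ω hA hB
    have h1 : X ω = a := hA
    have h2 : X ω = -a := hB
    linarith
  have hSAB : S =ᵐ[ℙ] ((A ∪ B : Set Ω)) := by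
    rw [eventuallyEq_set]
    filter_upwards [htri] with ω hω
    constructor
    · intro hωS
      have hS' : a ≤ |X ω| := hωS
      rcases hω with h | h | h
      · right; exact h
      · exfalso; rw [h] at hS'; simp at hS'; linarith
      · left; exact h
    · intro h
      rcases h with h | h
      · have : X ω = a := h
        show a ≤ |X ω|
        rw [this, abs_of_pos hapos]
      · have : X ω = -a := h
        show a ≤ |X ω|
        rw [this, abs_neg, abs_of_pos hapos]
  have hmeasSAB : ℙ S = ℙ A + ℙ B := by
    rw [measure_congr hSAB, measure_union hAB_disj hBmeas]
  set pA := (ℙ A).toReal with hpAdef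
  set pB := (ℙ B).toReal with hpBdef
  have hsum : pA + pB = t := by
    rw [hpAdef, hpBdef, htdef, hmeasSAB,
      ENNReal.toReal_add (measure_ne_top _ _) (measure_ne_top _ _)]
  have hXrep : X =ᵐ[ℙ] fun ω => A.indicator (fun _ => a) ω + B.indicator (fun _ => -a) ω := by
    filter_upwards [htri] with ω hω
    have hne1 : (-a : ℝ) ≠ a := by intro h; linarith
    have hne2 : (0 : ℝ) ≠ a := by intro h; linarith
    have hne3 : (0 : ℝ) ≠ -a := by intro h; linarith
    rcases hω with h | h | h
    · have hA' : ω ∉ A := by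
        intro hc; have hc' : X ω = a := hc; rw [h] at hc'; exact hne1 hc'
      have hB' : ω ∈ B := h
      simp [Set.indicator_of_notMem hA', Set.indicator_of_mem hB', h]
    · have hA' : ω ∉ A := by
        intro hc; have hc' : X ω = a := hc; rw [h] at hc'; exact hne2 hc'
      have hB' : ω ∉ B := by
        intro hc; have hc' : X ω = -a := hc; rw [h] at hc'; exact hne3 hc'
      simp [Set.indicator_of_notMem hA', Set.indicator_of_notMem hB', h]
    · have hA' : ω ∈ A := h
      have hB' : ω ∉ B := by
        intro hc; have hc' : X ω = -a := hc; rw [h] at hc'; exact hne1 hc'.symm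
      simp [Set.indicator_of_mem hA', Set.indicator_of_notMem hB', h]
  have hmean' : a * pA - a * pB = 0 := by
    have h1 : ∫ ω, X ω ∂ℙ = a * pA + (-a) * pB := by
      rw [integral_congr_ae hXrep,
        integral_add ((integrable_const _).indicator hAmeas)
          ((integrable_const _).indicator hBmeas),
        integral_indicator_const _ hAmeas, integral_indicator_const _ hBmeas,
        smul_eq_mul, smul_eq_mul, measureReal_def, measureReal_def, hpAdef, hpBdef]
      ring
    rw [hmean] at h1
    linarith
  have hpApB : pA = pB := by
    have ha0 : a ≠ 0 := ne_of_gt hapos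
    have := hmean'
    have : a * (pA - pB) = 0 := by linarith
    rcases mul_eq_zero.mp this with h | h
    · exact absurd h ha0
    · linarith
  have hpA_val : pA = 1 / (2 * κ ^ 2) := by
    rw [ht_eq] at hsum
    rw [hpApB] at hsum ⊢
    field_simp at hsum ⊢
    linarith
  have hPA : ℙ A = ENNReal.ofReal (1 / (2 * κ ^ 2)) := by
    rw [← hpA_val, hpAdef, ENNReal.ofReal_toReal (measure_ne_top _ _)]
  have hPB : ℙ B = ENNReal.ofReal (1 / (2 * κ ^ 2)) := by
    have : pB = 1 / (2 * κ ^ 2) := hpApB ▸ hpA_val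
    rw [← this, hpBdef, ENNReal.ofReal_toReal (measure_ne_top _ _)]
  have hPS : ℙ S = ENNReal.ofReal (1 / κ ^ 2) := by
    rw [← ht_eq, htdef, ENNReal.ofReal_toReal (measure_ne_top _ _)]
  have hZS : Z =ᵐ[ℙ] (Sᶜ : Set Ω) := by
    rw [eventuallyEq_set]
    filter_upwards [htri] with ω hω
    constructor
    · intro hZ'
      have h0 : X ω = 0 := hZ'
      intro hS'
      have : a ≤ |X ω| := hS'
      rw [h0] at this; simp at this; linarith
    · intro hS'
      rcases hω with h | h | h
      · exfalso; apply hS'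
        show a ≤ |X ω|
        rw [h, abs_neg, abs_of_pos hapos]
      · exact h
      · exfalso; apply hS'
        show a ≤ |X ω|
        rw [h, abs_of_pos hapos]
  have hPZ : ℙ Z = ENNReal.ofReal (1 - 1 / κ ^ 2) := by
    rw [measure_congr hZS, prob_compl_eq_one_sub hSmeas, hPS,
      ← ENNReal.ofReal_one, ← ENNReal.ofReal_sub _ (by positivity)]
  exact ⟨htri, hPA, hPB, hPZ⟩
end
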